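/- Let H be a separable Hilbert space and K a compact self-adjoint operator on H whose eigenvalues all have eigenspaces of dimension at most N < ∞. Enumerate the eigenvalues as λ₁, λ₂, … with multiplicities N_j ≤ N, and for each j choose orthonormal eigenfunctions φ_{j,1},…,φ_{j,N_j} spanning the eigenspace of λ_j, setting φ_{j,k} = 0 for N_j < k ≤ N. If for each k = 1,…,N one sets ξ_k = Σ_j c_{j,k} φ_{j,k} with all c_{j,k} ≠ 0 and the series converging in H, and the eigenvectors of K span a dense subspace of H, then L_{ξ₁} + ⋯ + L_{ξ_N} = H. -/

import Mathlib

open scoped RealInnerProductSpace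

/-- The cyclic subspace `L_ξ` generated by `ξ`: the closure of the span of `{Kⁿ ξ}`. -/
noncomputable def cyclicSubspace {H : Type*} [NormedAddCommGroup H] [InnerProductSpace ℝ H]
    (K : H →L[ℝ] H) (ξ : H) : Submodule ℝ H :=
  (Submodule.span ℝ (Set.range fun n : ℕ => (K ^ n) ξ)).topologicalClosure

section Aux

lemma aux_isClosed_sup {H : Type*} [NormedAddCommGroup H] [InnerProductSpace ℝ H] [CompleteSpace H]
    {A B : Submodule ℝ H} (hA : IsClosed (A : Set H)) (hB : IsClosed (B : Set H))
    (hAB : B ≤ Aᗮ) : IsClosed ((A ⊔ B : Submodule ℝ H) : Set H) := by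
  haveI : CompleteSpace A := hA.completeSpace_coe
  set P : H →L[ℝ] H := A.subtypeL.comp (Submodule.orthogonalProjection A) with hP
  have hPA : ∀ x, P x ∈ A := fun x => (Submodule.orthogonalProjection A x).2
  have hPid : ∀ a ∈ A, P a = a := by
    intro a ha
    exact Submodule.starProjection_eq_self_iff.2 ha
  have hPB : ∀ b ∈ B, P b = 0 := by
    intro b hb
    simp [hP, Submodule.orthogonalProjectionOnto_apply_of_mem_orthogonal (hAB hb)]
  refine isClosed_of_closure_subset ?_
  intro x hx
  have h2 : x - P x ∈ B := by
    have hcont : Continuous fun y : H => y - P y := continuous_id.sub P.continuous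
    have hmem : (fun y : H => y - P y) x ∈
        closure ((fun y : H => y - P y) '' ((A ⊔ B : Submodule ℝ H) : Set H)) :=
      image_closure_subset_closure_image hcont ⟨x, hx, rfl⟩
    have himg : (fun y : H => y - P y) '' ((A ⊔ B : Submodule ℝ H) : Set H) ⊆ (B : Set H) := by
      rintro _ ⟨y, hy, rfl⟩
      obtain ⟨a, ha, b, hb, rfl⟩ := Submodule.mem_sup.1 hy
      have : P (a + b) = a := by rw [map_add, hPid a ha, hPB b hb, add_zero]
      simpa [this] using hb
    have := closure_mono himg hmem
    rwa [hB.closure_eq] at this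
  exact Submodule.mem_sup.2 ⟨P x, hPA x, x - P x, h2, by abel⟩

lemma aux_isClosed_iSup {H : Type*} [NormedAddCommGroup H] [InnerProductSpace ℝ H] [CompleteSpace H]
    {ι : Type*} (L : ι → Submodule ℝ H) (s : Finset ι)
    (hcl : ∀ i, IsClosed (L i : Set H)) (horth : ∀ i j, i ≠ j → L j ≤ (L i)ᗮ) :
    IsClosed ((⨆ i ∈ s, L i : Submodule ℝ H) : Set H) := by
  classical
  induction s using Finset.induction with
  | empty => simpa using isClosed_singleton
  | insert a s ha ih =>
    rw [Finset.iSup_insert]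
    refine aux_isClosed_sup (hcl a) ih ?_
    exact iSup₂_le fun i hi => horth a i (fun h => ha (h ▸ hi))

lemma aux_isClosed_iSup' {H : Type*} [NormedAddCommGroup H] [InnerProductSpace ℝ H] [CompleteSpace H]
    {n : ℕ} (L : Fin n → Submodule ℝ H)
    (hcl : ∀ i, IsClosed (L i : Set H)) (horth : ∀ i j, i ≠ j → L j ≤ (L i)ᗮ) :
    IsClosed ((⨆ i, L i : Submodule ℝ H) : Set H) := by
  have := aux_isClosed_iSup L Finset.univ hcl horth
  simpa using this

lemma aux_moments {b lam : ℕ → ℝ} (hinj : Function.Injective lam)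
    (hb : Summable fun j => |b j|) {R : ℝ}
    (hR : ∀ j, |lam j| ≤ R)
    (hfin : ∀ ε : ℝ, 0 < ε → {j : ℕ | ε ≤ |lam j|}.Finite)
    (hmom : ∀ n : ℕ, ∑' j, b j * lam j ^ n = 0) :
    ∀ j, b j = 0 := by
  classical
  have hR0 : 0 ≤ R := le_trans (abs_nonneg _) (hR 0)
  set X : Set ℝ := Set.Icc (-R) R with hX
  have hmemX : ∀ j, lam j ∈ X := fun j => Set.mem_Icc.2 (abs_le.1 (hR j))
  set pt : ℕ → X := fun j => ⟨lam j, hmemX j⟩ with hpt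
  have hsummg : ∀ g : C(X, ℝ), Summable fun j => b j * g (pt j) := by
    intro g
    refine Summable.of_abs (Summable.of_nonneg_of_le (fun j => abs_nonneg _)
      (fun j => ?_) (hb.mul_right ‖g‖))
    rw [abs_mul]
    refine mul_le_mul_of_nonneg_left ?_ (abs_nonneg _)
    have := g.norm_coe_le_norm (pt j)
    rwa [Real.norm_eq_abs] at this
  have hmomsum : ∀ n : ℕ, Summable fun j => b j * lam j ^ n := by
    intro n
    refine Summable.of_abs (Summable.of_nonneg_of_le (fun j => abs_nonneg _)
      (fun j => ?_) (hb.mul_right (R ^ n)))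
    rw [abs_mul, abs_pow]
    exact mul_le_mul_of_nonneg_left (pow_le_pow_left₀ (abs_nonneg _) (hR j) n) (abs_nonneg _)
  set F₀ : C(X, ℝ) →ₗ[ℝ] ℝ :=
    { toFun := fun g => ∑' j, b j * g (pt j)
      map_add' := by
        intro g h
        simp only [ContinuousMap.add_apply, mul_add]
        exact Summable.tsum_add (hsummg g) (hsummg h)
      map_smul' := by
        intro r g
        have : (fun j => b j * (r • g) (pt j)) = fun j => r * (b j * g (pt j)) := by
          funext j; simp; ring
        rw [this, tsum_mul_left]
        simp } with hF₀
  have hFbound : ∀ g : C(X, ℝ), ‖F₀ g‖ ≤ (∑' j, |b j|) * ‖g‖ := by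
    intro g
    have h1 : ‖∑' j, b j * g (pt j)‖ ≤ ∑' j, ‖b j * g (pt j)‖ :=
      norm_tsum_le_tsum_norm (by simpa [Real.norm_eq_abs, abs_mul] using (hsummg g).abs)
    refine le_trans h1 ?_
    rw [← tsum_mul_right]
    refine Summable.tsum_le_tsum (fun j => ?_) (by simpa [Real.norm_eq_abs, abs_mul] using (hsummg g).abs)
      (hb.mul_right ‖g‖)
    rw [Real.norm_eq_abs, abs_mul]
    refine mul_le_mul_of_nonneg_left ?_ (abs_nonneg _)
    have := g.norm_coe_le_norm (pt j)
    rwa [Real.norm_eq_abs] at this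
  set F : C(X, ℝ) →L[ℝ] ℝ := F₀.mkContinuous (∑' j, |b j|) hFbound with hF
  have hpoly : ∀ g ∈ polynomialFunctions X, F g = 0 := by
    intro g hg
    rw [← SetLike.mem_coe, polynomialFunctions_coe] at hg
    obtain ⟨p, rfl⟩ := hg
    have hFg : F (Polynomial.toContinuousMapOnAlgHom X p) = ∑' j, b j * p.eval (lam j) := rfl
    rw [hFg]
    have heval : (fun j => b j * p.eval (lam j)) = fun j =>
        ∑ n ∈ Finset.range (p.natDegree + 1), p.coeff n * (b j * lam j ^ n) := by
      funext j
      rw [Polynomial.eval_eq_sum_range, Finset.mul_sum]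
      exact Finset.sum_congr rfl fun n _ => by ring
    rw [heval, Summable.tsum_finsetSum (fun n _ => (hmomsum n).mul_left _)]
    refine Finset.sum_eq_zero fun n _ => ?_
    rw [tsum_mul_left, hmom n, mul_zero]
  have hF0 : ∀ g : C(X, ℝ), F g = 0 := by
    intro g
    have hdense := polynomialFunctions_closure_eq_top (-R) R
    have h' : (polynomialFunctions X).topologicalClosure = ⊤ := hdense
    have hg : g ∈ closure ((polynomialFunctions X : Set C(X, ℝ))) := by
      rw [← Subalgebra.topologicalClosure_coe, h']
      simp
    have hZ : closure ((polynomialFunctions X : Set C(X, ℝ))) ⊆ F ⁻¹' {0} :=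
      closure_minimal (fun h hh => hpoly h hh) (IsClosed.preimage F.continuous isClosed_singleton)
    exact hZ hg
  have step1 : ∀ j, lam j ≠ 0 → b j = 0 := by
    intro j hlj
    set ε : ℝ := |lam j| / 2 with hε
    have hεpos : 0 < ε := by
      have : 0 < |lam j| := abs_pos.2 hlj
      positivity
    have hTfin := hfin ε hεpos
    set s : Finset ℕ := hTfin.toFinset.erase j with hs
    have hδ : ∃ δ : ℝ, 0 < δ ∧ ∀ i, i ≠ j → δ ≤ |lam i - lam j| := by
      have key : ∀ i, i ≠ j → i ∉ s → ε ≤ |lam i - lam j| := by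
        intro i hij his
        have : ¬ ε ≤ |lam i| := by
          intro h
          exact his (Finset.mem_erase.2 ⟨hij, hTfin.mem_toFinset.2 h⟩)
        have h1 : |lam i| < ε := not_le.1 this
        have h2 : |lam j| - |lam i| ≤ |lam j - lam i| := abs_sub_abs_le_abs_sub _ _
        rw [abs_sub_comm] at h2
        have : |lam j| = 2 * ε := by rw [hε]; ring
        linarith
      by_cases hne : s.Nonempty
      · refine ⟨min ε (s.inf' hne fun i => |lam i - lam j|), lt_min hεpos ?_, fun i hij => ?_⟩
        · rw [Finset.lt_inf'_iff]
          intro i hi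
          exact abs_pos.2 (sub_ne_zero.2 fun h => (Finset.mem_erase.1 hi).1 (hinj h))
        · by_cases his : i ∈ s
          · exact le_trans (min_le_right _ _) (Finset.inf'_le _ his)
          · exact le_trans (min_le_left _ _) (key i hij his)
      · exact ⟨ε, hεpos, fun i hij => key i hij (fun h => hne ⟨i, h⟩)⟩
    obtain ⟨δ, hδpos, hδ⟩ := hδ
    set g : C(X, ℝ) :=
      ⟨fun x => max 0 (1 - |(x : ℝ) - lam j| / δ), by
        refine Continuous.max continuous_const ?_
        exact continuous_const.sub (((continuous_subtype_val.sub continuous_const).abs).div_const δ)⟩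
      with hg
    have hgj : g (pt j) = 1 := by
      simp [hg, hpt]
    have hgi : ∀ i, i ≠ j → g (pt i) = 0 := by
      intro i hij
      have h1 : (1 : ℝ) ≤ |lam i - lam j| / δ := (one_le_div hδpos).2 (hδ i hij)
      have : (1 : ℝ) - |lam i - lam j| / δ ≤ 0 := by linarith
      simp only [hg, hpt, ContinuousMap.coe_mk]
      exact max_eq_left this
    have hFg : F g = ∑' i, b i * g (pt i) := rfl
    have := hF0 g
    rw [hFg, tsum_eq_single j (fun i hij => by rw [hgi i hij, mul_zero])] at this
    rw [hgj, mul_one] at this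
    exact this
  intro j
  by_cases hlj : lam j = 0
  · have h0 := hmom 0
    simp only [pow_zero, mul_one] at h0
    rw [tsum_eq_single j (fun i hij => step1 i fun h => hij (hinj (h.trans hlj.symm)))] at h0
    exact h0
  · exact step1 j hlj

lemma aux_fin {H : Type*} [NormedAddCommGroup H] [InnerProductSpace ℝ H]
    (K : H →L[ℝ] H) (hcpt : IsCompactOperator K)
    (lam : ℕ → ℝ) (u : ℕ → H)
    (hnorm : ∀ j, ‖u j‖ = 1)
    (hKu : ∀ j, K (u j) = lam j • u j)
    (horth : ∀ i j, i ≠ j → ⟪u i, u j⟫ = 0)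
    {ε : ℝ} (hε : 0 < ε) : {j : ℕ | ε ≤ |lam j|}.Finite := by
  classical
  by_contra hfin
  have hinf : {j : ℕ | ε ≤ |lam j|}.Infinite := hfin
  haveI := hinf.to_subtype
  set T := {j : ℕ | ε ≤ |lam j|} with hT
  obtain ⟨C, hCc, hCV⟩ := hcpt
  obtain ⟨r, hr, hball⟩ := Metric.mem_nhds_iff.1 hCV
  set s := r / 2 with hs
  have hspos : 0 < s := by positivity
  set p : ℕ → H := fun j => K (s • u j) with hp
  have hpC : ∀ j, p j ∈ C := by
    intro j
    refine hball ?_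
    rw [mem_ball_zero_iff, norm_smul, hnorm, mul_one, Real.norm_eq_abs, abs_of_pos hspos]
    rw [hs]; linarith
  have hdist : ∀ i j : ℕ, i ≠ j → i ∈ T → j ∈ T →
      2 * (s * ε) ^ 2 ≤ ‖p i - p j‖ ^ 2 := by
    intro i j hij hi hj
    have hpi : p i = (s * lam i) • u i := by
      rw [hp]; simp [map_smul, hKu i, smul_smul]
    have hpj : p j = (s * lam j) • u j := by
      rw [hp]; simp [map_smul, hKu j, smul_smul]
    rw [hpi, hpj, @norm_sub_sq_real]
    rw [real_inner_smul_left, real_inner_smul_right, horth i j hij]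
    simp only [norm_smul, Real.norm_eq_abs, hnorm, mul_one, mul_zero, sub_zero]
    have h1 : (s * ε) ^ 2 ≤ |s * lam i| ^ 2 := by
      have : s * ε ≤ |s * lam i| := by
        rw [abs_mul, abs_of_pos hspos]
        exact mul_le_mul_of_nonneg_left hi hspos.le
      exact pow_le_pow_left₀ (by positivity) this 2
    have h2 : (s * ε) ^ 2 ≤ |s * lam j| ^ 2 := by
      have : s * ε ≤ |s * lam j| := by
        rw [abs_mul, abs_of_pos hspos]
        exact mul_le_mul_of_nonneg_left hj hspos.le
      exact pow_le_pow_left₀ (by positivity) this 2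
    linarith
  have htb : TotallyBounded C := hCc.totallyBounded
  obtain ⟨t, htfin, hcover⟩ := (Metric.totallyBounded_iff).1 htb (s * ε / 2) (by positivity)
  haveI : Finite ↥t := htfin.to_subtype
  have hchoice : ∀ j : T, ∃ y : ↥t, p j ∈ Metric.ball (y : H) (s * ε / 2) := by
    intro j
    have := hcover (hpC (j : ℕ))
    rw [Set.mem_iUnion₂] at this
    obtain ⟨y, hy, hmem⟩ := this
    exact ⟨⟨y, hy⟩, hmem⟩
  choose f hf using hchoice
  obtain ⟨i, j, hij, hfij⟩ := Finite.exists_ne_map_eq_of_infinite f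
  have hij' : (i : ℕ) ≠ (j : ℕ) := fun h => hij (Subtype.ext h)
  have hd : dist (p i) (p j) < s * ε := by
    have h1 := hf i
    have h2 := hf j
    rw [hfij] at h1
    rw [Metric.mem_ball] at h1 h2
    calc dist (p i) (p j) ≤ dist (p i) (f j : H) + dist (p j) (f j : H) :=
          dist_triangle_right _ _ _
      _ < s * ε / 2 + s * ε / 2 := add_lt_add h1 h2
      _ = s * ε := by ring
  have hd2 : ‖p (i : ℕ) - p (j : ℕ)‖ ^ 2 < (s * ε) ^ 2 := by
    rw [← dist_eq_norm]
    have h0 : (0:ℝ) ≤ dist (p (i:ℕ)) (p (j:ℕ)) := dist_nonneg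
    nlinarith
  have := hdist i j hij' i.2 j.2
  nlinarith [sq_nonneg (s * ε)]

end Aux

/-- `K` compact self-adjoint with all eigenvalue multiplicities `≤ N`,
eigenvalues enumerated as `λ₁, λ₂, …` (distinct), each eigenspace of dimension `N_j ≤ N`
spanned by orthonormal eigenfunctions `φ_{j,1},…,φ_{j,N_j}` with `φ_{j,k} = 0` for
`N_j < k ≤ N`.  If `ξ_k = Σ_j c_{j,k} φ_{j,k}` with all `c_{j,k} ≠ 0` (series converging
in `H`), and the eigenvectors of `K` span a dense subspace, then
`L_{ξ₁} + ⋯ + L_{ξ_N} = H`. -/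
theorem stmt3 {H : Type*} [NormedAddCommGroup H] [InnerProductSpace ℝ H] [CompleteSpace H]
    [TopologicalSpace.SeparableSpace H]
    (K : H →L[ℝ] H) (hcpt : IsCompactOperator K) (hsa : IsSelfAdjoint K)
    (N : ℕ)
    (lam : ℕ → ℝ) (hinj : Function.Injective lam)
    (hev : ∀ j, Module.End.HasEigenvalue (K : H →ₗ[ℝ] H) (lam j))
    (hall : ∀ μ : ℝ, Module.End.HasEigenvalue (K : H →ₗ[ℝ] H) μ → ∃ j, lam j = μ)
    (Nj : ℕ → ℕ) (hNjN : ∀ j, Nj j ≤ N)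
    (hmult : ∀ j, Module.finrank ℝ (Module.End.eigenspace (K : H →ₗ[ℝ] H) (lam j)) = Nj j)
    (φ : ℕ → Fin N → H)
    (hφnorm : ∀ j, ∀ k : Fin N, (k : ℕ) < Nj j → ‖φ j k‖ = 1)
    (hφorth : ∀ j, ∀ k l : Fin N, (k : ℕ) < Nj j → (l : ℕ) < Nj j → k ≠ l →
      ⟪φ j k, φ j l⟫ = 0)
    (hφzero : ∀ j, ∀ k : Fin N, Nj j ≤ (k : ℕ) → φ j k = 0)
    (hφspan : ∀ j, Submodule.span ℝ {x | ∃ k : Fin N, (k : ℕ) < Nj j ∧ x = φ j k} =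
      Module.End.eigenspace (K : H →ₗ[ℝ] H) (lam j))
    (hdense : (⨆ j : ℕ,
      Module.End.eigenspace (K : H →ₗ[ℝ] H) (lam j)).topologicalClosure = ⊤)
    (c : ℕ → Fin N → ℝ) (hc : ∀ j k, c j k ≠ 0)
    (ξ : Fin N → H)
    (hξ : ∀ k : Fin N, HasSum (fun j : ℕ => c j k • φ j k) (ξ k)) :
    (⨆ k : Fin N, cyclicSubspace K (ξ k)) = ⊤ := by
  classical
  have hsym : (K : H →ₗ[ℝ] H).IsSymmetric :=
    ContinuousLinearMap.isSelfAdjoint_iff_isSymmetric.1 hsa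
  have eig_orth : ∀ {μ ν : ℝ}, μ ≠ ν → ∀ {v w : H},
      v ∈ Module.End.eigenspace (K : H →ₗ[ℝ] H) μ →
      w ∈ Module.End.eigenspace (K : H →ₗ[ℝ] H) ν → ⟪v, w⟫ = 0 := by
    intro μ ν h v w hv hw
    exact hsym.orthogonalFamily_eigenspaces h ⟨v, hv⟩ ⟨w, hw⟩
  -- every eigenspace is nontrivial, so `Nj j ≥ 1` and `N ≥ 1`
  have hN1 : ∀ j, 1 ≤ Nj j := by
    intro j
    by_contra h
    push_neg at h
    have hNj0 : Nj j = 0 := Nat.lt_one_iff.1 h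
    have hset : {x : H | ∃ k : Fin N, (k : ℕ) < Nj j ∧ x = φ j k} = ∅ := by
      ext x
      simp [hNj0]
    have := hφspan j
    rw [hset, Submodule.span_empty] at this
    exact Module.End.hasEigenvalue_iff.1 (hev j) this.symm
  have hN0 : 0 < N := lt_of_lt_of_le (hN1 0) (hNjN 0)
  -- eigenvector facts
  have hφeig : ∀ j (k : Fin N), φ j k ∈ Module.End.eigenspace (K : H →ₗ[ℝ] H) (lam j) := by
    intro j k
    by_cases hk : (k : ℕ) < Nj j
    · rw [← hφspan j]
      exact Submodule.subset_span ⟨k, hk, rfl⟩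
    · rw [hφzero j k (not_lt.1 hk)]
      exact zero_mem _
  have hKφ : ∀ j (k : Fin N), K (φ j k) = lam j • φ j k := fun j k =>
    Module.End.mem_eigenspace_iff.1 (hφeig j k)
  have hKnφ : ∀ (n : ℕ) j (k : Fin N), (K ^ n) (φ j k) = lam j ^ n • φ j k := by
    intro n j k
    induction n with
    | zero => simp
    | succ n ih =>
      rw [pow_succ', ContinuousLinearMap.mul_apply, ih, map_smul, hKφ, smul_smul, ← pow_succ]
  -- pairwise orthogonality of all the φ's
  have horthφ : ∀ (j : ℕ) (k : Fin N) (j' : ℕ) (k' : Fin N), (j, k) ≠ (j', k') →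
      ⟪φ j k, φ j' k'⟫ = 0 := by
    intro j k j' k' hne
    by_cases hjj : j = j'
    · subst hjj
      have hkk : k ≠ k' := fun h => hne (by rw [h])
      by_cases h1 : (k : ℕ) < Nj j
      · by_cases h2 : (k' : ℕ) < Nj j
        · exact hφorth j k k' h1 h2 hkk
        · rw [hφzero j k' (not_lt.1 h2), inner_zero_right]
      · rw [hφzero j k (not_lt.1 h1), inner_zero_left]
    · exact eig_orth (fun h => hjj (hinj h)) (hφeig j k) (hφeig j' k')
  -- unit eigenvectors and consequences
  set u : ℕ → H := fun j => φ j ⟨0, hN0⟩ with hu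
  have hunorm : ∀ j, ‖u j‖ = 1 := fun j => hφnorm j _ (hN1 j)
  have hueig : ∀ j, K (u j) = lam j • u j := fun j => hKφ j _
  have huorth : ∀ i j, i ≠ j → ⟪u i, u j⟫ = 0 := fun i j hij =>
    horthφ i _ j _ (fun h => hij (congrArg Prod.fst h))
  have hfinε : ∀ ε : ℝ, 0 < ε → {j : ℕ | ε ≤ |lam j|}.Finite := fun ε hε =>
    aux_fin K hcpt lam u hunorm hueig huorth hε
  have hRbound : ∀ j, |lam j| ≤ ‖K‖ := by
    intro j
    have h1 : ‖K (u j)‖ = |lam j| := by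
      rw [hueig j, norm_smul, hunorm j, mul_one, Real.norm_eq_abs]
    have h2 := K.le_opNorm (u j)
    rw [h1, hunorm j, mul_one] at h2
    exact h2
  -- the closed spans of the φ's and the cyclic subspaces
  set M : Fin N → Submodule ℝ H := fun k =>
    (Submodule.span ℝ (Set.range fun j : ℕ => φ j k)).topologicalClosure with hM
  set L : Fin N → Submodule ℝ H := fun k => cyclicSubspace K (ξ k) with hL
  have hLclosed : ∀ k, IsClosed ((L k : Submodule ℝ H) : Set H) := fun k =>
    Submodule.isClosed_topologicalClosure _
  have hgenL : ∀ (n : ℕ) (k : Fin N), (K ^ n) (ξ k) ∈ L k := fun n k =>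
    Submodule.le_topologicalClosure _ (Submodule.subset_span ⟨n, rfl⟩)
  have hφM : ∀ (j : ℕ) (k : Fin N), φ j k ∈ M k := fun j k =>
    Submodule.le_topologicalClosure _ (Submodule.subset_span ⟨j, rfl⟩)
  -- `Kⁿ ξ k` as a sum
  have hKnξ : ∀ (n : ℕ) (k : Fin N),
      HasSum (fun j : ℕ => (c j k * lam j ^ n) • φ j k) ((K ^ n) (ξ k)) := by
    intro n k
    have h1 := ((K ^ n : H →L[ℝ] H)).hasSum (hξ k)
    have h2 : (fun j : ℕ => (K ^ n) (c j k • φ j k)) =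
        fun j : ℕ => (c j k * lam j ^ n) • φ j k := by
      funext j
      rw [map_smul, hKnφ n j k, smul_smul]
    rwa [h2] at h1
  have hLM : ∀ k, L k ≤ M k := by
    intro k
    refine Submodule.topologicalClosure_minimal _ ?_ (Submodule.isClosed_topologicalClosure _)
    rw [Submodule.span_le]
    rintro x ⟨n, rfl⟩
    have hsum := (hKnξ n k).tendsto_sum_nat
    refine (Submodule.isClosed_topologicalClosure _).mem_of_tendsto hsum ?_
    exact Filter.Eventually.of_forall fun m =>
      Submodule.sum_mem _ fun j _ => Submodule.smul_mem _ _ (hφM j k)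
  -- membership in `(M k)ᗮ` from orthogonality to the generators
  have orth_span : ∀ (k : Fin N) (x : H), (∀ j : ℕ, ⟪φ j k, x⟫ = 0) → x ∈ (M k)ᗮ := by
    intro k x hx
    have h1 : x ∈ (Submodule.span ℝ (Set.range fun j : ℕ => φ j k))ᗮ := by
      rw [Submodule.mem_orthogonal]
      intro y hy
      induction hy using Submodule.span_induction with
      | mem y hy => obtain ⟨j, rfl⟩ := hy; exact hx j
      | zero => exact inner_zero_left x
      | add y z _ _ hy hz => rw [inner_add_left, hy, hz, add_zero]
      | smul a y _ hy => rw [real_inner_smul_left, hy, mul_zero]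
    show x ∈ ((Submodule.span ℝ (Set.range fun j : ℕ => φ j k)).topologicalClosure)ᗮ
    rwa [← Submodule.orthogonal_orthogonal_eq_closure, Submodule.triorthogonal_eq_orthogonal]
  have hMorth : ∀ k k' : Fin N, k ≠ k' → M k' ≤ (M k)ᗮ := by
    intro k k' hkk
    refine Submodule.topologicalClosure_minimal _ ?_ (Submodule.isClosed_orthogonal _)
    rw [Submodule.span_le]
    rintro x ⟨j', rfl⟩
    refine SetLike.mem_coe.2 (orth_span k _ fun j => ?_)
    exact horthφ j k j' k' (fun h => hkk (congrArg Prod.snd h))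
  -- the key step: each `M k` is contained in the cyclic subspace `L k`
  have hML : ∀ k, M k ≤ L k := by
    intro k
    haveI : CompleteSpace (L k) := (hLclosed k).completeSpace_coe
    intro x hx
    set v : H := x - (Submodule.orthogonalProjection (L k) x : H) with hv
    have hvorthL : v ∈ (L k)ᗮ := Submodule.sub_starProjection_mem_orthogonal x
    have hvM : v ∈ M k :=
      Submodule.sub_mem _ hx (hLM k (Submodule.orthogonalProjection (L k) x).2)
    -- the coefficients
    set b : ℕ → ℝ := fun j => c j k * ⟪φ j k, v⟫ with hb
    have hbzero_offS : ∀ j, ¬ ((k : ℕ) < Nj j) → b j = 0 := by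
      intro j hj
      rw [hb]
      dsimp only
      rw [hφzero j k (not_lt.1 hj), inner_zero_left, mul_zero]
    -- moment identities
    have hmomtsum : ∀ n : ℕ, ∑' j, b j * lam j ^ n = 0 := by
      intro n
      have h1 := (innerSL ℝ v).hasSum (hKnξ n k)
      have h2 : (fun j : ℕ => (innerSL ℝ v) ((c j k * lam j ^ n) • φ j k)) =
          fun j : ℕ => b j * lam j ^ n := by
        funext j
        simp only [innerSL_apply_apply, inner_smul_right, hb]
        rw [real_inner_comm v (φ j k)]
        ring
      rw [h2] at h1
      have h3 : ⟪v, (K ^ n) (ξ k)⟫ = 0 := by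
        rw [real_inner_comm]
        exact (Submodule.mem_orthogonal _ _).1 hvorthL _ (hgenL n k)
      rw [h1.tsum_eq]
      exact h3
    -- summability of |b|
    set S : Set ℕ := {j : ℕ | (k : ℕ) < Nj j} with hS
    set e : S → H := fun j => φ (j : ℕ) k with he
    have horthe : Orthonormal ℝ e := by
      constructor
      · intro i
        exact hφnorm (i : ℕ) k i.2
      · intro i i' hii
        exact horthφ (i : ℕ) k (i' : ℕ) k
          (fun h => hii (Subtype.ext (congrArg Prod.fst h)))
    have hcoef : ∀ i : S, ⟪e i, ξ k⟫ = c (i : ℕ) k := by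
      intro i
      have h1 := (innerSL ℝ (e i)).hasSum (hξ k)
      have h2 : HasSum (fun j : ℕ => (innerSL ℝ (e i)) (c j k • φ j k))
          ((innerSL ℝ (e i)) (c (i : ℕ) k • φ (i : ℕ) k)) := by
        refine hasSum_single (i : ℕ) fun j hj => ?_
        simp only [innerSL_apply_apply, inner_smul_right, he]
        rw [horthφ (i : ℕ) k j k (fun h => hj (congrArg Prod.fst h).symm), mul_zero]
      have h3' : ⟪e i, ξ k⟫ = c (i : ℕ) k * ⟪φ (i : ℕ) k, φ (i : ℕ) k⟫ := by
        have := h1.unique h2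
        simpa [inner_smul_right, he] using this
      rw [h3', real_inner_self_eq_norm_sq, hφnorm (i : ℕ) k i.2]
      ring
    have hbes1 : Summable fun i : S => ‖⟪e i, v⟫‖ ^ 2 := horthe.inner_products_summable v
    have hbes2 : Summable fun i : S => (c (i : ℕ) k) ^ 2 := by
      have := horthe.inner_products_summable (ξ k)
      refine this.congr fun i => ?_
      rw [hcoef i, Real.norm_eq_abs, sq_abs]
    have hbabs : Summable fun j => |b j| := by
      rw [← summable_subtype_and_compl (s := S)]
      constructor
      · refine Summable.of_nonneg_of_le (fun i => abs_nonneg _) (fun i => ?_)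
          ((hbes2.add hbes1).div_const 2)
        have h1 : |b (i : ℕ)| = |c (i : ℕ) k| * |⟪e i, v⟫| := by
          rw [hb]; dsimp only; rw [abs_mul, he]
        rw [h1, Real.norm_eq_abs]
        nlinarith [sq_nonneg (|c (i : ℕ) k| - |⟪e i, v⟫|), abs_nonneg (c (i : ℕ) k),
          abs_nonneg (⟪e i, v⟫ : ℝ), sq_abs (c (i : ℕ) k), sq_abs (⟪e i, v⟫ : ℝ)]
      · refine summable_of_ne_finset_zero (s := ∅) fun i _ => ?_
        rw [hbzero_offS (i : ℕ) i.2, abs_zero]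
    -- conclude all inner products vanish
    have hbz := aux_moments hinj hbabs hRbound hfinε hmomtsum
    have hinnz : ∀ j : ℕ, ⟪φ j k, v⟫ = 0 := by
      intro j
      have := hbz j
      rw [hb] at this
      exact (mul_eq_zero.1 this).resolve_left (hc j k)
    have hvMorth : v ∈ (M k)ᗮ := orth_span k v hinnz
    have hv0 : v = 0 := Submodule.disjoint_def.1 (Submodule.orthogonal_disjoint (M k)) v hvM hvMorth
    have : x = (Submodule.orthogonalProjection (L k) x : H) := by
      have := sub_eq_zero.1 hv0
      exact this
    rw [this]
    exact (Submodule.orthogonalProjection (L k) x).2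
  -- eigenspaces are contained in the sup of the cyclic subspaces
  have heig_le : ∀ j : ℕ, Module.End.eigenspace (K : H →ₗ[ℝ] H) (lam j) ≤ ⨆ k : Fin N, L k := by
    intro j
    rw [← hφspan j, Submodule.span_le]
    rintro x ⟨k, hk, rfl⟩
    exact SetLike.mem_coe.2 (le_iSup L k (hML k (hφM j k)))
  -- the sup of the cyclic subspaces is closed
  have horthL : ∀ k k' : Fin N, k ≠ k' → L k' ≤ (L k)ᗮ := fun k k' h =>
    le_trans (hLM k') (le_trans (hMorth k k' h) (Submodule.orthogonal_le (hLM k)))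
  have hSclosed : IsClosed ((⨆ k : Fin N, L k : Submodule ℝ H) : Set H) :=
    aux_isClosed_iSup' L hLclosed horthL
  -- finish
  have h1 : (⨆ j : ℕ, Module.End.eigenspace (K : H →ₗ[ℝ] H) (lam j)) ≤ ⨆ k : Fin N, L k :=
    iSup_le heig_le
  have h2 := Submodule.topologicalClosure_mono h1
  rw [hdense] at h2
  have h3 : (⨆ k : Fin N, L k).topologicalClosure = ⨆ k : Fin N, L k :=
    le_antisymm (Submodule.topologicalClosure_minimal _ le_rfl hSclosed)
      (Submodule.le_topologicalClosure _)
  rw [h3] at h2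
  exact le_antisymm le_top h2
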